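/- The integral of V over [−2,2] equals (4/9)(7√2 + 4 + 3 log(√2 + 1)), where V is the even function defined piecewisely by V(δ) = 4 − 2δ − δ² + δ²log(1+δ) − 2(1−δ)log(1−δ) for 0 ≤ δ < 1, V(δ) = 4 − 2δ − δ² + δ²log(δ+1) + 2(δ−1)log(δ−1) for 1 < δ ≤ √2, V(δ) = δ² − 2δ − (δ²−2δ+2)log(δ−1) for √2 < δ ≤ 2. -/

import Mathlib

open Set Real intervalIntegral MeasureTheory

/-- The even function V of the paper. -/
noncomputable def V (δ : ℝ) : ℝ :=
  let t := |δ|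
  if t < 1 then
    4 - 2 * t - t ^ 2 + t ^ 2 * Real.log (1 + t) - 2 * (1 - t) * Real.log (1 - t)
  else if t = 1 then 1 + Real.log 2
  else if t ≤ Real.sqrt 2 then
    4 - 2 * t - t ^ 2 + t ^ 2 * Real.log (t + 1) + 2 * (t - 1) * Real.log (t - 1)
  else t ^ 2 - 2 * t - (t ^ 2 - 2 * t + 2) * Real.log (t - 1)

noncomputable def myf1 (t : ℝ) : ℝ :=
  4 - 2*t - t^2 + t^2 * Real.log (1+t) - 2*((1-t) * Real.log (1-t))

noncomputable def myF1 (t : ℝ) : ℝ :=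
  (t^3/3 + 1/3) * Real.log (1+t) + (1-t) * ((1-t) * Real.log (1-t))
  + (4*t - t^2 - t^3/3 - t^3/9 + t^2/6 - t/3 + t - t^2/2)

noncomputable def myf2 (t : ℝ) : ℝ :=
  4 - 2*t - t^2 + t^2 * Real.log (t+1) + 2*((t-1) * Real.log (t-1))

noncomputable def myF2 (t : ℝ) : ℝ :=
  (t^3/3 + 1/3) * Real.log (t+1) + (t-1) * ((t-1) * Real.log (t-1))
  + (4*t - t^2 - t^3/3 - t^3/9 + t^2/6 - t/3 - (t-1)^2/2)

noncomputable def myf3 (t : ℝ) : ℝ :=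
  t^2 - 2*t - (t^2 - 2*t + 2) * Real.log (t-1)

noncomputable def myF3 (t : ℝ) : ℝ :=
  -(t^3/3 - t^2 + 2*t - 4/3) * Real.log (t-1) + (t^3/3 - t^2 + t^3/9 - t^2/3 + 4*t/3)

lemma contML1 : Continuous fun x : ℝ => (1-x) * Real.log (1-x) :=
  Real.continuous_mul_log.comp (continuous_const.sub continuous_id)

lemma contML2 : Continuous fun x : ℝ => (x-1) * Real.log (x-1) :=
  Real.continuous_mul_log.comp (continuous_id.sub continuous_const)

lemma hder1 : ∀ t ∈ Set.Ioo (0:ℝ) 1, HasDerivAt myF1 (myf1 t) t := by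
  intro t ht
  have h1 : (1:ℝ)+t ≠ 0 := by nlinarith [ht.1]
  have h2 : (1:ℝ)-t ≠ 0 := by nlinarith [ht.2]
  have L1 : HasDerivAt (fun x : ℝ => Real.log (1+x)) (1/(1+t)) t := by
    simpa using ((hasDerivAt_id t).const_add 1).log h1
  have L2 : HasDerivAt (fun x : ℝ => Real.log (1-x)) (-1/(1-t)) t := by
    simpa using ((hasDerivAt_id t).const_sub 1).log h2
  have A : HasDerivAt (fun x : ℝ => (x^3/3 + 1/3) * Real.log (1+x))
      ((3*t^2/3) * Real.log (1+t) + (t^3/3 + 1/3) * (1/(1+t))) t := by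
    refine ((((hasDerivAt_pow 3 t).div_const 3).add_const (1/3)).mul L1).congr_deriv ?_
    all_goals (push_cast; ring)
  have B : HasDerivAt (fun x : ℝ => (1-x) * ((1-x) * Real.log (1-x)))
      ((-1) * ((1-t) * Real.log (1-t)) + (1-t) * ((-1) * Real.log (1-t) + (1-t) * (-1/(1-t)))) t :=
    ((hasDerivAt_id t).const_sub 1).mul (((hasDerivAt_id t).const_sub 1).mul L2)
  have C : HasDerivAt (fun x : ℝ => 4*x - x^2 - x^3/3 - x^3/9 + x^2/6 - x/3 + x - x^2/2)
      (4 - 2*t - 3*t^2/3 - 3*t^2/9 + 2*t/6 - 1/3 + 1 - 2*t/2) t := by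
    have h1' := hasDerivAt_id t
    have h2' := hasDerivAt_pow 2 t
    have h3' := hasDerivAt_pow 3 t
    refine ((((((((h1'.const_mul 4).sub h2').sub (h3'.div_const 3)).sub
      (h3'.div_const 9)).add (h2'.div_const 6)).sub (h1'.div_const 3)).add h1').sub
      (h2'.div_const 2)).congr_deriv ?_
    all_goals (push_cast; ring)
  have H := (A.add B).add C
  have e : myf1 t = ((3*t^2/3) * Real.log (1+t) + (t^3/3 + 1/3) * (1/(1+t)))
      + ((-1) * ((1-t) * Real.log (1-t)) + (1-t) * ((-1) * Real.log (1-t) + (1-t) * (-1/(1-t))))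
      + (4 - 2*t - 3*t^2/3 - 3*t^2/9 + 2*t/6 - 1/3 + 1 - 2*t/2) := by
    unfold myf1; field_simp; ring
  rw [e]; exact H

lemma hder2 : ∀ t ∈ Set.Ioo (1:ℝ) (Real.sqrt 2), HasDerivAt myF2 (myf2 t) t := by
  intro t ht
  have h1 : t+1 ≠ 0 := by nlinarith [ht.1]
  have h2 : t-1 ≠ 0 := by nlinarith [ht.1]
  have L1 : HasDerivAt (fun x : ℝ => Real.log (x+1)) (1/(t+1)) t := by
    simpa using ((hasDerivAt_id t).add_const 1).log h1
  have L2 : HasDerivAt (fun x : ℝ => Real.log (x-1)) (1/(t-1)) t := by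
    simpa using ((hasDerivAt_id t).sub_const 1).log h2
  have A : HasDerivAt (fun x : ℝ => (x^3/3 + 1/3) * Real.log (x+1))
      ((3*t^2/3) * Real.log (t+1) + (t^3/3 + 1/3) * (1/(t+1))) t := by
    refine ((((hasDerivAt_pow 3 t).div_const 3).add_const (1/3)).mul L1).congr_deriv ?_
    all_goals (push_cast; ring)
  have B : HasDerivAt (fun x : ℝ => (x-1) * ((x-1) * Real.log (x-1)))
      (1 * ((t-1) * Real.log (t-1)) + (t-1) * (1 * Real.log (t-1) + (t-1) * (1/(t-1)))) t :=
    ((hasDerivAt_id t).sub_const 1).mul (((hasDerivAt_id t).sub_const 1).mul L2)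
  have C : HasDerivAt (fun x : ℝ => 4*x - x^2 - x^3/3 - x^3/9 + x^2/6 - x/3 - (x-1)^2/2)
      (4 - 2*t - 3*t^2/3 - 3*t^2/9 + 2*t/6 - 1/3 - 2*(t-1)/2) t := by
    have h1' := hasDerivAt_id t
    have h2' := hasDerivAt_pow 2 t
    have h3' := hasDerivAt_pow 3 t
    have h4' : HasDerivAt (fun x : ℝ => (x-1)^2) (2*(t-1)) t := by
      refine (((h1'.sub_const 1).pow 2)).congr_deriv ?_
      simp only [id_eq]; push_cast; ring
    refine (((((((h1'.const_mul 4).sub h2').sub (h3'.div_const 3)).sub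
      (h3'.div_const 9)).add (h2'.div_const 6)).sub (h1'.div_const 3)).sub
      (h4'.div_const 2)).congr_deriv ?_
    all_goals (push_cast; ring)
  have H := (A.add B).add C
  have e : myf2 t = ((3*t^2/3) * Real.log (t+1) + (t^3/3 + 1/3) * (1/(t+1)))
      + (1 * ((t-1) * Real.log (t-1)) + (t-1) * (1 * Real.log (t-1) + (t-1) * (1/(t-1))))
      + (4 - 2*t - 3*t^2/3 - 3*t^2/9 + 2*t/6 - 1/3 - 2*(t-1)/2) := by
    unfold myf2; field_simp; ring
  rw [e]; exact H

lemma hder3 : ∀ t : ℝ, 1 < t → HasDerivAt myF3 (myf3 t) t := by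
  intro t ht
  have h2 : t-1 ≠ 0 := by nlinarith
  have L2 : HasDerivAt (fun x : ℝ => Real.log (x-1)) (1/(t-1)) t := by
    simpa using ((hasDerivAt_id t).sub_const 1).log h2
  have h1' := hasDerivAt_id t
  have h2' := hasDerivAt_pow 2 t
  have h3' := hasDerivAt_pow 3 t
  have P : HasDerivAt (fun x : ℝ => -(x^3/3 - x^2 + 2*x - 4/3))
      (-(3*t^2/3 - 2*t + 2)) t := by
    refine (((((h3'.div_const 3).sub h2').add (h1'.const_mul 2)).sub_const (4/3)).neg).congr_deriv ?_
    all_goals (push_cast; ring)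
  have A := P.mul L2
  have C : HasDerivAt (fun x : ℝ => x^3/3 - x^2 + x^3/9 - x^2/3 + 4*x/3)
      (3*t^2/3 - 2*t + 3*t^2/9 - 2*t/3 + 4/3) t := by
    refine (((((h3'.div_const 3).sub h2').add (h3'.div_const 9)).sub (h2'.div_const 3)).add
      ((h1'.const_mul 4).div_const 3)).congr_deriv ?_
    all_goals (push_cast; ring)
  have H := A.add C
  have e : myf3 t = (-(3*t^2/3 - 2*t + 2) * Real.log (t-1)
      + -(t^3/3 - t^2 + 2*t - 4/3) * (1/(t-1)))
      + (3*t^2/3 - 2*t + 3*t^2/9 - 2*t/3 + 4/3) := by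
    unfold myf3; field_simp; ring
  rw [e]; exact H

lemma sqrt2_facts : (Real.sqrt 2)^2 = 2 ∧ 1 < Real.sqrt 2 ∧ Real.sqrt 2 < 2 := by
  have h := Real.sq_sqrt (by norm_num : (2:ℝ) ≥ 0)
  have h0 := Real.sqrt_nonneg 2
  refine ⟨h, ?_, ?_⟩ <;> nlinarith

lemma hlog : Real.log (Real.sqrt 2 - 1) = -Real.log (Real.sqrt 2 + 1) := by
  obtain ⟨hs, h1, h2⟩ := sqrt2_facts
  have hm : (Real.sqrt 2 - 1) * (Real.sqrt 2 + 1) = 1 := by nlinarith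
  have hne1 : Real.sqrt 2 - 1 ≠ 0 := by nlinarith
  have hne2 : Real.sqrt 2 + 1 ≠ 0 := by nlinarith
  have := Real.log_mul hne1 hne2
  rw [hm, Real.log_one] at this
  linarith

theorem stmt_16 :
    ∫ δ in (-2 : ℝ)..2, V δ =
      (4 / 9) * (7 * Real.sqrt 2 + 4 + 3 * Real.log (Real.sqrt 2 + 1)) := by
  obtain ⟨hs, hs1, hs2⟩ := sqrt2_facts
  set s := Real.sqrt 2 with hsdef
  set L := Real.log (s + 1) with hLdef
  -- continuity of the antiderivatives and integrands
  have clog1 : ContinuousOn (fun x : ℝ => Real.log (1+x)) (Icc 0 1) :=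
    (continuous_const.add continuous_id).continuousOn.log (fun x hx => by
      simp only [Pi.add_apply, id] at *; nlinarith [hx.1])
  have clog2 : ContinuousOn (fun x : ℝ => Real.log (x+1)) (Icc 1 s) :=
    (continuous_id.add continuous_const).continuousOn.log (fun x hx => by
      simp only [Pi.add_apply, id] at *; nlinarith [hx.1])
  have clog3 : ContinuousOn (fun x : ℝ => Real.log (x-1)) (Icc s 2) :=
    (continuous_id.sub continuous_const).continuousOn.log (fun x hx => by
      simp only [Pi.sub_apply, id] at *; nlinarith [hx.1])
  have hcF1 : ContinuousOn myF1 (Icc 0 1) := by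
    unfold myF1
    exact (((Continuous.continuousOn (by fun_prop)).mul clog1).add
      ((continuous_const.sub continuous_id).mul contML1).continuousOn).add
      (Continuous.continuousOn (by fun_prop))
  have hcf1 : ContinuousOn myf1 (Icc 0 1) := by
    unfold myf1
    exact ((Continuous.continuousOn (by fun_prop)).add
      ((continuous_pow 2).continuousOn.mul clog1)).sub
      ((continuous_const.mul contML1).continuousOn)
  have hcF2 : ContinuousOn myF2 (Icc 1 s) := by
    unfold myF2
    exact (((Continuous.continuousOn (by fun_prop)).mul clog2).add
      ((continuous_id.sub continuous_const).mul contML2).continuousOn).add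
      (Continuous.continuousOn (by fun_prop))
  have hcf2 : ContinuousOn myf2 (Icc 1 s) := by
    unfold myf2
    exact ((Continuous.continuousOn (by fun_prop)).add
      ((continuous_pow 2).continuousOn.mul clog2)).add
      ((continuous_const.mul contML2).continuousOn)
  have hcf3 : ContinuousOn myf3 (Icc s 2) := by
    unfold myf3
    exact (Continuous.continuousOn (by fun_prop)).sub
      ((Continuous.continuousOn (by fun_prop)).mul clog3)
  -- the three integrals of the explicit functions
  have hi1 : IntervalIntegrable myf1 volume 0 1 := by
    apply ContinuousOn.intervalIntegrable
    rwa [uIcc_of_le zero_le_one]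
  have hi2 : IntervalIntegrable myf2 volume 1 s := by
    apply ContinuousOn.intervalIntegrable
    rwa [uIcc_of_le hs1.le]
  have hi3 : IntervalIntegrable myf3 volume s 2 := by
    apply ContinuousOn.intervalIntegrable
    rwa [uIcc_of_le hs2.le]
  have I1 : ∫ x in (0:ℝ)..1, myf1 x = myF1 1 - myF1 0 :=
    integral_eq_sub_of_hasDeriv_right_of_le zero_le_one hcF1
      (fun x hx => (hder1 x hx).hasDerivWithinAt) hi1
  have I2 : ∫ x in (1:ℝ)..s, myf2 x = myF2 s - myF2 1 :=
    integral_eq_sub_of_hasDeriv_right_of_le hs1.le hcF2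
      (fun x hx => (hder2 x hx).hasDerivWithinAt) hi2
  have I3 : ∫ x in s..2, myf3 x = myF3 2 - myF3 s :=
    integral_eq_sub_of_hasDeriv_right_of_le hs2.le (by
      intro x hx
      exact ((hder3 x (lt_of_lt_of_le hs1 hx.1)).continuousAt).continuousWithinAt)
      (fun x hx => (hder3 x (lt_of_lt_of_le hs1 hx.1.le)).hasDerivWithinAt) hi3
  -- V agrees with the explicit functions on the pieces
  have hEq1 : EqOn V myf1 (uIcc 0 1) := by
    rw [uIcc_of_le zero_le_one]
    intro x hx
    simp only [V, myf1, abs_of_nonneg hx.1]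
    rcases lt_or_eq_of_le hx.2 with h | h
    · rw [if_pos h]; ring
    · rw [if_neg (by rw [h]; exact lt_irrefl 1), if_pos h]
      rw [h]
      norm_num [Real.log_zero]
  have hEq2 : EqOn V myf2 (uIcc 1 s) := by
    rw [uIcc_of_le hs1.le]
    intro x hx
    simp only [V, myf2, abs_of_nonneg (by linarith [hx.1] : (0:ℝ) ≤ x)]
    rw [if_neg (not_lt.mpr hx.1)]
    rcases eq_or_lt_of_le hx.1 with h | h
    · rw [if_pos h.symm, ← h]
      norm_num [Real.log_zero]
    · rw [if_neg (by intro hc; rw [hc] at h; exact lt_irrefl 1 h), if_pos hx.2]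
      ring
  have hEq3 : EqOn V myf3 (uIcc s 2) := by
    rw [uIcc_of_le hs2.le]
    intro x hx
    have hx1 : 1 < x := lt_of_lt_of_le hs1 hx.1
    simp only [V, myf3, abs_of_nonneg (by linarith : (0:ℝ) ≤ x)]
    rw [if_neg (not_lt.mpr hx1.le), if_neg (ne_of_gt hx1)]
    rcases eq_or_lt_of_le hx.1 with h | h
    · rw [if_pos (le_of_eq h.symm), ← h]
      rw [hlog]
      linear_combination (-2 : ℝ) * hs
    · rw [if_neg (not_le.mpr h)]
  -- integrability of V on the pieces
  have hIcongr : ∀ (f : ℝ → ℝ) (a b : ℝ), IntervalIntegrable f volume a b →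
      EqOn V f (uIcc a b) → IntervalIntegrable V volume a b := by
    intro f a b hf h
    rw [intervalIntegrable_iff] at hf ⊢
    exact (hf.congr_fun (fun x hx => (h (uIoc_subset_uIcc hx)).symm) measurableSet_uIoc)
  have hV1 := hIcongr _ _ _ hi1 hEq1
  have hV2 := hIcongr _ _ _ hi2 hEq2
  have hV3 := hIcongr _ _ _ hi3 hEq3
  have hV02 : IntervalIntegrable V volume 0 2 := (hV1.trans hV2).trans hV3
  have hVeven : ∀ x : ℝ, V (-x) = V x := by
    intro x; simp only [V, abs_neg]
  have hVneg : IntervalIntegrable V volume (-2) 0 := by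
    have h := (IntervalIntegrable.iff_comp_neg).mp hV02
    simp only [hVeven, neg_zero] at h
    exact h.symm
  -- assemble
  have hsplit : ∫ δ in (-2:ℝ)..2, V δ = (∫ δ in (-2:ℝ)..0, V δ) + ∫ δ in (0:ℝ)..2, V δ :=
    (integral_add_adjacent_intervals hVneg hV02).symm
  have hrefl : ∫ δ in (-2:ℝ)..0, V δ = ∫ δ in (0:ℝ)..2, V δ := by
    have h := intervalIntegral.integral_comp_neg (a := 0) (b := 2) (f := V)
    simp only [hVeven, neg_zero] at h
    rw [← h]
  have hsplit2 : ∫ δ in (0:ℝ)..2, V δ = (∫ x in (0:ℝ)..1, V x) + ((∫ x in (1:ℝ)..s, V x)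
      + ∫ x in s..2, V x) := by
    rw [integral_add_adjacent_intervals hV2 hV3,
      integral_add_adjacent_intervals hV1 (hV2.trans hV3)]
  -- values
  have v1 : myF1 1 - myF1 0 = 26/9 + (2/3) * Real.log 2 := by
    have e11 : ((1:ℝ)+1) = 2 := by norm_num
    unfold myF1
    rw [e11]
    norm_num [Real.log_zero, Real.log_one]
    ring
  have v2 : myF2 s - myF2 1 = 34*s/9 - 50/9 + (8*s-8)/3*L - (2/3) * Real.log 2 := by
    have e11 : ((1:ℝ)+1) = 2 := by norm_num
    unfold myF2
    rw [e11, hlog, ← hLdef]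
    linear_combination ((s-3)/3*L - 4*s/9 - 4/3) * hs
  have v3 : myF3 2 - myF3 s = -20*s/9 + 32/9 - (8*s-10)/3*L := by
    have e21 : ((2:ℝ)-1) = 1 := by norm_num
    unfold myF3
    rw [e21, Real.log_one, hlog, ← hLdef]
    linear_combination (-(s-3)/3*L - 4*s/9 + 4/3) * hs
  rw [hsplit, hrefl, hsplit2,
    intervalIntegral.integral_congr hEq1, intervalIntegral.integral_congr hEq2,
    intervalIntegral.integral_congr hEq3, I1, I2, I3, v1, v2, v3]
  ring
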